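/- Let E be a q-uniformly smooth (1 < q ≤ 2) and 2-uniformly convex real Banach space, C ⊆ E a nonempty closed convex subset, and T: C → E a firmly nonexpansive type mapping. Then for every R > 0 there exists a constant L > 0 such that for all x, y ∈ C with ‖x‖ ≤ R and ‖y‖ ≤ R, ‖Tx − Ty‖ ≤ L‖x − y‖^{q−1}. -/

import Mathlib

open Set

/-- Modulus of smoothness of a normed space `E`. -/
noncomputable def smoothnessModulus (E : Type*) [NormedAddCommGroup E] [NormedSpace ℝ E]
    (τ : ℝ) : ℝ :=
  sSup {t : ℝ | ∃ x y : E, ‖x‖ ≤ 1 ∧ ‖y‖ ≤ 1 ∧ t = (‖x + τ • y‖ + ‖x - τ • y‖) / 2 - 1}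

/-- Modulus of convexity of a normed space `E`. -/
noncomputable def convexityModulus (E : Type*) [NormedAddCommGroup E] [NormedSpace ℝ E]
    (ε : ℝ) : ℝ :=
  sInf {t : ℝ | ∃ x y : E, ‖x‖ ≤ 1 ∧ ‖y‖ ≤ 1 ∧ ‖x - y‖ = ε ∧ t = 1 - ‖x + y‖ / 2}

section Aux

variable {E : Type*} [NormedAddCommGroup E] [NormedSpace ℝ E]

-- helper: op norm bound from one-sided bound on unit ball
lemma opnorm_le_of_unit (φ : E →L[ℝ] ℝ) (M : ℝ) (hM : 0 ≤ M)
    (h : ∀ z : E, ‖z‖ ≤ 1 → φ z ≤ M) : ‖φ‖ ≤ M := by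
  apply ContinuousLinearMap.opNorm_le_bound φ hM
  intro z
  rcases eq_or_ne z 0 with rfl | hz
  · simp [hM]
  · have hzn : 0 < ‖z‖ := norm_pos_iff.2 hz
    set w : E := ‖z‖⁻¹ • z with hw
    have hwn : ‖w‖ = 1 := by
      rw [hw, norm_smul, norm_inv, norm_norm, inv_mul_cancel₀ (ne_of_gt hzn)]
    have h1 : φ w ≤ M := h w (le_of_eq hwn)
    have h2 : φ (-w) ≤ M := h (-w) (by rw [norm_neg]; exact le_of_eq hwn)
    have h2' : -φ w ≤ M := by simpa using h2
    have h3 : |φ w| ≤ M := abs_le.2 ⟨by linarith, h1⟩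
    have hzw : z = ‖z‖ • w := by rw [hw, smul_smul, mul_inv_cancel₀ (ne_of_gt hzn), one_smul]
    have hφz : φ z = ‖z‖ * φ w := by
      conv_lhs => rw [hzw]
      rw [map_smul, smul_eq_mul]
    rw [hφz, Real.norm_eq_abs, abs_mul, abs_of_pos hzn, mul_comm M ‖z‖]
    exact mul_le_mul_of_nonneg_left h3 hzn.le

-- arithmetic core for strong monotonicity
lemma core_arith (A B S c γ ε w : ℝ) (hA : 0 < A) (hB : 0 < B) (hAB : A ≤ B)
    (hc : 0 < c) (hγ : 0 < γ) (hγ1 : γ ≤ 1/2) (hγ2 : γ ≤ 2*c) (hε0 : 0 ≤ ε)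
    (hS : S ≤ 2 - 4*c*ε^2) (hw0 : 0 ≤ w) (hloc : w ≤ A*ε + (B - A)) :
    γ * w^2 ≤ A^2 + B^2 - A*B*S := by
  have h6 : w^2 ≤ (A*ε + (B - A))^2 := by
    apply pow_le_pow_left₀ hw0 hloc
  have h7 : (A*ε + (B - A))^2 ≤ 2*(A*ε)^2 + 2*(B - A)^2 := by
    nlinarith [sq_nonneg (A*ε - (B - A))]
  have h8 : A*B*S ≤ A*B*(2 - 4*c*ε^2) :=
    mul_le_mul_of_nonneg_left hS (le_of_lt (mul_pos hA hB))
  have h9 : γ * w^2 ≤ γ * (2*(A*ε)^2 + 2*(B - A)^2) :=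
    mul_le_mul_of_nonneg_left (by linarith) hγ.le
  have hint1 : γ*(2*(A*ε)^2) ≤ 2*c*(2*(A*ε)^2) :=
    mul_le_mul_of_nonneg_right hγ2 (by positivity)
  have hint2 : γ*(2*(B - A)^2) ≤ (1/2)*(2*(B - A)^2) :=
    mul_le_mul_of_nonneg_right hγ1 (by positivity)
  have h11 : A*A ≤ A*B := mul_le_mul_of_nonneg_left hAB hA.le
  have hint3 : (A*A)*(4*c*ε^2) ≤ (A*B)*(4*c*ε^2) :=
    mul_le_mul_of_nonneg_right h11 (by positivity)
  nlinarith [h8, h9, hint1, hint2, hint3]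

end Aux

set_option maxHeartbeats 1000000 in
theorem stmt9 {E : Type*} [NormedAddCommGroup E] [NormedSpace ℝ E] [CompleteSpace E]
    (J : E → (E →L[ℝ] ℝ))
    (hJ : ∀ x : E, J x x = ‖x‖ ^ 2) (hJn : ∀ x : E, ‖J x‖ = ‖x‖)
    (K q : ℝ) (hK : 0 < K) (hq1 : 1 < q) (hq2 : q ≤ 2)
    -- q-uniform smoothness
    (hρ : ∀ τ > (0:ℝ), smoothnessModulus E τ ≤ K * τ ^ q)
    -- 2-uniform convexity
    (h2uc : ∃ c > (0:ℝ), ∀ ε ∈ Ioc (0:ℝ) 2, c * ε ^ 2 ≤ convexityModulus E ε)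
    (C : Set E) (hCne : C.Nonempty) (hCcl : IsClosed C) (hCcv : Convex ℝ C)
    (T : E → E)
    -- firmly nonexpansive type on C
    (hT : ∀ x ∈ C, ∀ y ∈ C,
      (J (T x) - J (T y)) (T x - T y) ≤ (J x - J y) (T x - T y)) :
    ∀ R > (0:ℝ), ∃ L > (0:ℝ), ∀ x ∈ C, ∀ y ∈ C, ‖x‖ ≤ R → ‖y‖ ≤ R →
      ‖T x - T y‖ ≤ L * ‖x - y‖ ^ (q - 1) := by
  obtain ⟨c, hc, hmod⟩ := h2uc
  have hq1' : (0:ℝ) < q - 1 := by linarith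
  -- smoothness inequality
  have smooth : ∀ τ : ℝ, 0 < τ → ∀ a b : E, ‖a‖ ≤ 1 → ‖b‖ ≤ 1 →
      ‖a + τ • b‖ + ‖a - τ • b‖ ≤ 2 + 2 * (K * τ ^ q) := by
    intro τ hτ a b ha hb
    have hmem : (‖a + τ • b‖ + ‖a - τ • b‖) / 2 - 1 ∈
        {t : ℝ | ∃ x y : E, ‖x‖ ≤ 1 ∧ ‖y‖ ≤ 1 ∧ t = (‖x + τ • y‖ + ‖x - τ • y‖) / 2 - 1} :=
      ⟨a, b, ha, hb, rfl⟩
    have hbdd : BddAbove {t : ℝ | ∃ x y : E, ‖x‖ ≤ 1 ∧ ‖y‖ ≤ 1 ∧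
        t = (‖x + τ • y‖ + ‖x - τ • y‖) / 2 - 1} := by
      refine ⟨τ, ?_⟩
      rintro t ⟨x, y, hx, hy, rfl⟩
      have h1 : ‖x + τ • y‖ ≤ 1 + τ := by
        calc ‖x + τ • y‖ ≤ ‖x‖ + ‖τ • y‖ := norm_add_le _ _
          _ ≤ 1 + τ := by
            rw [norm_smul, Real.norm_eq_abs, abs_of_pos hτ]
            nlinarith
      have h2 : ‖x - τ • y‖ ≤ 1 + τ := by
        calc ‖x - τ • y‖ ≤ ‖x‖ + ‖τ • y‖ := norm_sub_le _ _
          _ ≤ 1 + τ := by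
            rw [norm_smul, Real.norm_eq_abs, abs_of_pos hτ]
            nlinarith
      linarith
    have h1 := le_csSup hbdd hmem
    have h2 := hρ τ hτ
    have : (‖a + τ • b‖ + ‖a - τ • b‖) / 2 - 1 ≤ K * τ ^ q := by
      calc (‖a + τ • b‖ + ‖a - τ • b‖) / 2 - 1 ≤ smoothnessModulus E τ := h1
        _ ≤ K * τ ^ q := h2
    linarith
  -- convexity inequality
  have conv : ∀ p r : E, ‖p‖ = 1 → ‖r‖ = 1 → p ≠ r →
      ‖p + r‖ ≤ 2 - 2 * (c * ‖p - r‖ ^ 2) := by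
    intro p r hp hr hne
    have hε : 0 < ‖p - r‖ := by
      rw [norm_pos_iff]; exact sub_ne_zero.2 hne
    have hε2 : ‖p - r‖ ≤ 2 := by
      calc ‖p - r‖ ≤ ‖p‖ + ‖r‖ := norm_sub_le _ _
        _ = 2 := by rw [hp, hr]; norm_num
    have hmem : 1 - ‖p + r‖ / 2 ∈
        {t : ℝ | ∃ x y : E, ‖x‖ ≤ 1 ∧ ‖y‖ ≤ 1 ∧ ‖x - y‖ = ‖p - r‖ ∧ t = 1 - ‖x + y‖ / 2} :=
      ⟨p, r, hp.le, hr.le, rfl, rfl⟩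
    have hbdd : BddBelow {t : ℝ | ∃ x y : E, ‖x‖ ≤ 1 ∧ ‖y‖ ≤ 1 ∧ ‖x - y‖ = ‖p - r‖ ∧
        t = 1 - ‖x + y‖ / 2} := by
      refine ⟨0, ?_⟩
      rintro t ⟨x, y, hx, hy, -, rfl⟩
      have : ‖x + y‖ ≤ 2 := by
        calc ‖x + y‖ ≤ ‖x‖ + ‖y‖ := norm_add_le _ _
          _ ≤ 2 := by linarith
      linarith
    have h1 := csInf_le hbdd hmem
    have h2 := hmod ‖p - r‖ ⟨hε, hε2⟩
    have : c * ‖p - r‖ ^ 2 ≤ 1 - ‖p + r‖ / 2 := by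
      calc c * ‖p - r‖ ^ 2 ≤ convexityModulus E ‖p - r‖ := h2
        _ ≤ 1 - ‖p + r‖ / 2 := h1
    linarith
  have J0 : J 0 = 0 := by
    have h := hJn (0 : E)
    rw [norm_zero] at h
    exact norm_eq_zero.1 h
  -- uniqueness of norming functionals
  have uniq : ∀ u : E, ‖u‖ = 1 → ∀ f g : E →L[ℝ] ℝ, ‖f‖ ≤ 1 → ‖g‖ ≤ 1 →
      f u = 1 → g u = 1 → f = g := by
    intro u hu f g hf hg hfu hgu
    have key : ∀ τ : ℝ, 0 < τ → ‖f - g‖ ≤ 2 * K * τ ^ (q - 1) := by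
      intro τ hτ
      have hM : (0:ℝ) ≤ 2 * K * τ ^ (q - 1) := by positivity
      apply opnorm_le_of_unit _ _ hM
      intro z hz
      have hs := smooth τ hτ u z hu.le hz
      have h1 : f (u + τ • z) ≤ ‖u + τ • z‖ := by
        calc f (u + τ • z) ≤ |f (u + τ • z)| := le_abs_self _
          _ = ‖f (u + τ • z)‖ := (Real.norm_eq_abs _).symm
          _ ≤ ‖f‖ * ‖u + τ • z‖ := f.le_opNorm _
          _ ≤ 1 * ‖u + τ • z‖ := by
              have := norm_nonneg (u + τ • z); nlinarith
          _ = ‖u + τ • z‖ := one_mul _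
      have h2 : g (u - τ • z) ≤ ‖u - τ • z‖ := by
        calc g (u - τ • z) ≤ |g (u - τ • z)| := le_abs_self _
          _ = ‖g (u - τ • z)‖ := (Real.norm_eq_abs _).symm
          _ ≤ ‖g‖ * ‖u - τ • z‖ := g.le_opNorm _
          _ ≤ 1 * ‖u - τ • z‖ := by
              have := norm_nonneg (u - τ • z); nlinarith
          _ = ‖u - τ • z‖ := one_mul _
      have e1 : f (u + τ • z) = 1 + τ * f z := by
        rw [map_add, map_smul, hfu, smul_eq_mul]
      have e2 : g (u - τ • z) = 1 - τ * g z := by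
        rw [map_sub, map_smul, hgu, smul_eq_mul]
      have hτq : τ ^ (q - 1) * τ = τ ^ q := by
        rw [← Real.rpow_add_one (ne_of_gt hτ)]
        ring_nf
      have hsum : τ * (f z - g z) ≤ 2 * (K * τ ^ q) := by
        rw [e1] at h1; rw [e2] at h2; linarith
      have : (f - g) z = f z - g z := by simp
      rw [this]
      rw [← hτq] at hsum
      have := le_of_mul_le_mul_right (by linarith : (f z - g z) * τ ≤ (2 * K * τ ^ (q - 1)) * τ) hτ
      exact this
    have hle : ‖f - g‖ ≤ 0 := by
      by_contra hcon
      push_neg at hcon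
      set ε := ‖f - g‖ with hε
      set τ : ℝ := (ε / (4 * K)) ^ (q - 1)⁻¹ with hτdef
      have hτpos : 0 < τ := Real.rpow_pos_of_pos (by positivity) _
      have hτq : τ ^ (q - 1) = ε / (4 * K) := by
        rw [hτdef, Real.rpow_inv_rpow (by positivity) (ne_of_gt hq1')]
      have := key τ hτpos
      rw [hτq] at this
      have h4K : 2 * K * (ε / (4 * K)) = ε / 2 := by
        field_simp
        ring
      rw [h4K] at this
      linarith
    have : f - g = 0 := by
      have := le_antisymm hle (norm_nonneg _)
      exact norm_eq_zero.1 this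
    exact sub_eq_zero.1 this
  -- scaling identity for J
  have Jscale : ∀ x : E, x ≠ 0 → J x = ‖x‖ • J (‖x‖⁻¹ • x) := by
    intro x hx
    have hxn : 0 < ‖x‖ := norm_pos_iff.2 hx
    set u : E := ‖x‖⁻¹ • x with hudef
    have hu : ‖u‖ = 1 := by
      rw [hudef, norm_smul, norm_inv, norm_norm, inv_mul_cancel₀ (ne_of_gt hxn)]
    have hn1 : ‖‖x‖⁻¹ • J x‖ ≤ 1 := by
      have hns := norm_smul (‖x‖⁻¹) (J x)
      rw [hns, norm_inv, norm_norm, hJn, inv_mul_cancel₀ (ne_of_gt hxn)]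
    have hn2 : ‖J u‖ ≤ 1 := by rw [hJn, hu]
    have hv1 : (‖x‖⁻¹ • J x) u = 1 := by
      have e1 : J x u = ‖x‖⁻¹ * ‖x‖ ^ 2 := by
        rw [hudef, map_smul, smul_eq_mul, hJ]
      have e2 : (‖x‖⁻¹ • J x) u = ‖x‖⁻¹ * (J x u) :=
        ContinuousLinearMap.smul_apply _ _ _
      rw [e2, e1, sq]
      field_simp
    have hv2 : (J u) u = 1 := by rw [hJ, hu]; norm_num
    have heq := uniq u hu (‖x‖⁻¹ • J x) (J u) hn1 hn2 hv1 hv2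
    rw [← heq, smul_smul, mul_inv_cancel₀ (ne_of_gt hxn), one_smul]
  -- Hölder estimate for J on unit sphere
  have unit_holder : ∀ x y : E, ‖x‖ = 1 → ‖y‖ = 1 →
      ‖J x - J y‖ ≤ (4 * K * 2 ^ (q - 1)) * ‖x - y‖ ^ (q - 1) := by
    intro x y hx hy
    rcases eq_or_ne x y with rfl | hne
    · simp [Real.zero_rpow (ne_of_gt hq1')]
    · set d := ‖x - y‖ with hddef
      have hd : 0 < d := by rw [hddef, norm_pos_iff]; exact sub_ne_zero.2 hne
      set N := ‖J x - J y‖ with hNdef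
      have hN0 : 0 ≤ N := norm_nonneg _
      have key : ∀ z : E, ‖z‖ ≤ 1 → (J x - J y) z ≤ 2 * K * (2 * d) ^ (q - 1) + N / 2 := by
        intro z hz
        set τ : ℝ := 2 * d with hτdef
        have hτ : 0 < τ := by positivity
        have hs := smooth τ hτ x z hx.le hz
        have hfx : J x x = 1 := by rw [hJ, hx]; norm_num
        have hgy : J y y = 1 := by rw [hJ, hy]; norm_num
        have h1 : J x (x + τ • z) ≤ ‖x + τ • z‖ := by
          calc J x (x + τ • z) ≤ |J x (x + τ • z)| := le_abs_self _
            _ = ‖J x (x + τ • z)‖ := (Real.norm_eq_abs _).symm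
            _ ≤ ‖J x‖ * ‖x + τ • z‖ := (J x).le_opNorm _
            _ = ‖x + τ • z‖ := by rw [hJn, hx, one_mul]
        have h2 : J y (x - τ • z) ≤ ‖x - τ • z‖ := by
          calc J y (x - τ • z) ≤ |J y (x - τ • z)| := le_abs_self _
            _ = ‖J y (x - τ • z)‖ := (Real.norm_eq_abs _).symm
            _ ≤ ‖J y‖ * ‖x - τ • z‖ := (J y).le_opNorm _
            _ = ‖x - τ • z‖ := by rw [hJn, hy, one_mul]
        have e1 : J x (x + τ • z) = 1 + τ * J x z := by
          rw [map_add, map_smul, hfx, smul_eq_mul]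
        have e2 : J y (x - τ • z) = J y x - τ * J y z := by
          rw [map_sub, map_smul, smul_eq_mul]
        -- lower bound for J y x
        have hJxy : J x y ≤ 1 := by
          calc J x y ≤ |J x y| := le_abs_self _
            _ = ‖J x y‖ := (Real.norm_eq_abs _).symm
            _ ≤ ‖J x‖ * ‖y‖ := (J x).le_opNorm _
            _ = 1 := by rw [hJn, hx, hy, one_mul]
        have hsub : (J x - J y) (x - y) ≤ N * d := by
          calc (J x - J y) (x - y) ≤ |(J x - J y) (x - y)| := le_abs_self _
            _ = ‖(J x - J y) (x - y)‖ := (Real.norm_eq_abs _).symm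
            _ ≤ ‖J x - J y‖ * ‖x - y‖ := (J x - J y).le_opNorm _
            _ = N * d := rfl
        have hexp : (J x - J y) (x - y) = J x x - J x y - J y x + J y y := by
          simp [map_sub]
          ring
        have hJyx : 1 - N * d ≤ J y x := by
          rw [hexp, hfx, hgy] at hsub
          linarith
        have hτq : τ ^ (q - 1) * τ = τ ^ q := by
          rw [← Real.rpow_add_one (ne_of_gt hτ)]
          ring_nf
        have hsum : τ * (J x z - J y z) ≤ 2 * (K * τ ^ q) + N * d := by
          rw [e1] at h1; rw [e2] at h2
          linarith
        have happ : (J x - J y) z = J x z - J y z := by simp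
        rw [happ]
        have hdτ : N * d = (N / 2) * τ := by rw [hτdef]; ring
        rw [hdτ, ← hτq] at hsum
        have : (J x z - J y z) * τ ≤ (2 * K * τ ^ (q - 1) + N / 2) * τ := by
          ring_nf
          ring_nf at hsum
          linarith
        exact le_of_mul_le_mul_right this hτ
      have hNb : N ≤ 2 * K * (2 * d) ^ (q - 1) + N / 2 :=
        opnorm_le_of_unit _ _ (by positivity) key
      have hsplit : (2 * d) ^ (q - 1) = 2 ^ (q - 1) * d ^ (q - 1) :=
        Real.mul_rpow (by norm_num) hd.le
      rw [hsplit] at hNb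
      calc N ≤ 4 * K * (2 ^ (q - 1) * d ^ (q - 1)) := by linarith
        _ = (4 * K * 2 ^ (q - 1)) * d ^ (q - 1) := by ring
  intro R hR
  set cq : ℝ := 4 * K * 2 ^ (q - 1) with hcqdef
  have hcq : 0 < cq := by
    have : (0:ℝ) < (2:ℝ) ^ (q - 1) := Real.rpow_pos_of_pos (by norm_num) _
    positivity
  set M0 : ℝ := cq * (2 ^ (q - 1) * R ^ (2 - q)) + (2 * R) ^ (2 - q) with hM0def
  have h2q : (0:ℝ) ≤ 2 - q := by linarith
  have hM0 : 0 < M0 := by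
    have h1 : (0:ℝ) < (2:ℝ) ^ (q - 1) := Real.rpow_pos_of_pos (by norm_num) _
    have h2 : (0:ℝ) < R ^ (2 - q) := Real.rpow_pos_of_pos hR _
    have h3 : (0:ℝ) < (2 * R) ^ (2 - q) := Real.rpow_pos_of_pos (by linarith) _
    positivity
  -- Hölder estimate for J on the ball of radius R
  have J_holder : ∀ x y : E, ‖x‖ ≤ R → ‖y‖ ≤ R → ‖J x - J y‖ ≤ M0 * ‖x - y‖ ^ (q - 1) := by
    intro x y hxR hyR
    rcases eq_or_ne x y with rfl | hne
    · have : ‖J x - J x‖ = 0 := by simp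
      rw [this]
      have : ‖x - x‖ ^ (q - 1) = 0 := by
        simp [Real.zero_rpow (ne_of_gt hq1')]
      rw [this, mul_zero]
    · set d := ‖x - y‖ with hddef
      have hd : 0 < d := by rw [hddef, norm_pos_iff]; exact sub_ne_zero.2 hne
      have hdq : 0 < d ^ (q - 1) := Real.rpow_pos_of_pos hd _
      have hd2R : d ≤ 2 * R := by
        rw [hddef]
        calc ‖x - y‖ ≤ ‖x‖ + ‖y‖ := norm_sub_le _ _
          _ ≤ 2 * R := by linarith
      -- the linear term estimate: d ≤ (2R)^(2-q) * d^(q-1)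
      have hlin : d ≤ (2 * R) ^ (2 - q) * d ^ (q - 1) := by
        have e : d ^ (2 - q) * d ^ (q - 1) = d := by
          rw [← Real.rpow_add hd]
          norm_num
        have h5 : d ^ (2 - q) ≤ (2 * R) ^ (2 - q) :=
          Real.rpow_le_rpow hd.le hd2R h2q
        calc d = d ^ (2 - q) * d ^ (q - 1) := e.symm
          _ ≤ (2 * R) ^ (2 - q) * d ^ (q - 1) :=
            mul_le_mul_of_nonneg_right h5 hdq.le
      rcases eq_or_ne x 0 with rfl | hx0
      · have hJx : J 0 = 0 := J0
        have : ‖J 0 - J y‖ = ‖y‖ := by rw [hJx, zero_sub, norm_neg, hJn]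
        rw [this]
        have hyd : ‖y‖ = d := by rw [hddef, zero_sub, norm_neg]
        rw [hyd]
        calc d ≤ (2 * R) ^ (2 - q) * d ^ (q - 1) := hlin
          _ ≤ M0 * d ^ (q - 1) := by
            apply mul_le_mul_of_nonneg_right _ hdq.le
            rw [hM0def]
            have hcqpos : 0 < cq * (2 ^ (q - 1) * R ^ (2 - q)) :=
              mul_pos hcq (mul_pos (Real.rpow_pos_of_pos (by norm_num) _)
                (Real.rpow_pos_of_pos hR _))
            linarith
      rcases eq_or_ne y 0 with rfl | hy0
      · have : ‖J x - J 0‖ = ‖x‖ := by rw [J0, sub_zero, hJn]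
        rw [this]
        have hxd : ‖x‖ = d := by rw [hddef, sub_zero]
        rw [hxd]
        calc d ≤ (2 * R) ^ (2 - q) * d ^ (q - 1) := hlin
          _ ≤ M0 * d ^ (q - 1) := by
            apply mul_le_mul_of_nonneg_right _ hdq.le
            rw [hM0def]
            have hcqpos : 0 < cq * (2 ^ (q - 1) * R ^ (2 - q)) :=
              mul_pos hcq (mul_pos (Real.rpow_pos_of_pos (by norm_num) _)
                (Real.rpow_pos_of_pos hR _))
            linarith
      · -- both nonzero
        have hA : 0 < ‖x‖ := norm_pos_iff.2 hx0
        have hB : 0 < ‖y‖ := norm_pos_iff.2 hy0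
        set A := ‖x‖ with hAdef
        set B := ‖y‖ with hBdef
        set u : E := ‖x‖⁻¹ • x with hudef
        set v : E := ‖y‖⁻¹ • y with hvdef
        have hu1 : ‖u‖ = 1 := by
          rw [hudef, norm_smul, norm_inv, norm_norm, inv_mul_cancel₀ (ne_of_gt hA)]
        have hv1 : ‖v‖ = 1 := by
          rw [hvdef, norm_smul, norm_inv, norm_norm, inv_mul_cancel₀ (ne_of_gt hB)]
        have hJx : J x = A • J u := Jscale x hx0
        have hJy : J y = B • J v := Jscale y hy0
        have hABd : |A - B| ≤ d := by
          rw [hAdef, hBdef, hddef]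
          exact abs_norm_sub_norm_le x y
        have huv : ‖u - v‖ ≤ 2 * d / A := by
          have step1 : ‖u - v‖ ≤ ‖u - ‖x‖⁻¹ • y‖ + ‖‖x‖⁻¹ • y - v‖ := norm_sub_le_norm_sub_add_norm_sub _ _ _
          have e1 : ‖u - ‖x‖⁻¹ • y‖ = d / A := by
            rw [hudef, ← smul_sub, norm_smul, norm_inv, norm_norm, ← hddef, ← hAdef]
            rw [div_eq_inv_mul]
          have e2 : ‖‖x‖⁻¹ • y - v‖ = |A⁻¹ - B⁻¹| * B := by
            rw [hvdef, ← hAdef, ← hBdef]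
            rw [← sub_smul, norm_smul, Real.norm_eq_abs, ← hBdef]
          have habs : A⁻¹ - B⁻¹ = (B - A) / (A * B) := by field_simp
          have e3 : |A⁻¹ - B⁻¹| * B ≤ d / A := by
            have h5 : |B - A| ≤ d := by rw [abs_sub_comm]; exact hABd
            calc |A⁻¹ - B⁻¹| * B = |B - A| / (A * B) * B := by
                  rw [habs, abs_div, abs_of_pos (by positivity : (0:ℝ) < A * B)]
              _ = |B - A| / A := by field_simp
              _ ≤ d / A := by gcongr
          calc ‖u - v‖ ≤ ‖u - ‖x‖⁻¹ • y‖ + ‖‖x‖⁻¹ • y - v‖ := step1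
            _ ≤ d / A + d / A := by rw [e1]; linarith
            _ = 2 * d / A := by ring
        have hsplit : ‖J x - J y‖ ≤ A * ‖J u - J v‖ + |A - B| := by
          have e : J x - J y = A • (J u - J v) + (A - B) • J v := by
            rw [hJx, hJy, smul_sub]
            module
          calc ‖J x - J y‖ = ‖A • (J u - J v) + (A - B) • J v‖ := by rw [e]
            _ ≤ ‖A • (J u - J v)‖ + ‖(A - B) • J v‖ := norm_add_le _ _
            _ = A * ‖J u - J v‖ + |A - B| := by
                have n1 := norm_smul A (J u - J v)
                have n2 := norm_smul (A - B) (J v)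
                rw [n1, n2, Real.norm_eq_abs, Real.norm_eq_abs,
                  abs_of_pos hA, hJn, hv1, mul_one]
        have hJuv : ‖J u - J v‖ ≤ cq * (2 * d / A) ^ (q - 1) := by
          calc ‖J u - J v‖ ≤ cq * ‖u - v‖ ^ (q - 1) := unit_holder u v hu1 hv1
            _ ≤ cq * (2 * d / A) ^ (q - 1) := by
                apply mul_le_mul_of_nonneg_left _ hcq.le
                exact Real.rpow_le_rpow (norm_nonneg _) huv (le_of_lt hq1')
        have hmain : A * (cq * (2 * d / A) ^ (q - 1)) ≤ cq * (2 ^ (q - 1) * R ^ (2 - q)) * d ^ (q - 1) := by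
          have e1 : (2 * d / A) ^ (q - 1) = (2 * d) ^ (q - 1) / A ^ (q - 1) :=
            Real.div_rpow (by positivity) hA.le (q - 1)
          have e2 : (2 * d) ^ (q - 1) = 2 ^ (q - 1) * d ^ (q - 1) :=
            Real.mul_rpow (by norm_num) hd.le
          have e3 : A / A ^ (q - 1) = A ^ (2 - q) := by
            conv_rhs => rw [show (2 - q) = 1 - (q - 1) by ring, Real.rpow_sub hA,
              Real.rpow_one]
          have e4 : A ^ (2 - q) ≤ R ^ (2 - q) := Real.rpow_le_rpow hA.le hxR h2q
          calc A * (cq * (2 * d / A) ^ (q - 1))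
              = cq * (2 ^ (q - 1) * (A / A ^ (q - 1))) * d ^ (q - 1) := by
                rw [e1, e2]; ring
            _ = cq * (2 ^ (q - 1) * A ^ (2 - q)) * d ^ (q - 1) := by rw [e3]
            _ ≤ cq * (2 ^ (q - 1) * R ^ (2 - q)) * d ^ (q - 1) := by
                apply mul_le_mul_of_nonneg_right _ hdq.le
                have h2pos : (0:ℝ) < (2:ℝ) ^ (q - 1) := Real.rpow_pos_of_pos (by norm_num) _
                have := mul_le_mul_of_nonneg_left e4 (le_of_lt (mul_pos hcq h2pos))
                nlinarith [this]
        calc ‖J x - J y‖ ≤ A * ‖J u - J v‖ + |A - B| := hsplit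
          _ ≤ A * (cq * (2 * d / A) ^ (q - 1)) + (2 * R) ^ (2 - q) * d ^ (q - 1) := by
              have := mul_le_mul_of_nonneg_left hJuv hA.le
              linarith
          _ ≤ cq * (2 ^ (q - 1) * R ^ (2 - q)) * d ^ (q - 1) + (2 * R) ^ (2 - q) * d ^ (q - 1) := by
              linarith
          _ = M0 * d ^ (q - 1) := by rw [hM0def]; ring
  -- strong monotonicity of J from 2-uniform convexity
  set γ : ℝ := min (1/2 : ℝ) (2 * c) with hγdef
  have hγ : 0 < γ := lt_min (by norm_num) (by linarith)
  have hγ1 : γ ≤ 1/2 := min_le_left _ _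
  have hγ2 : γ ≤ 2 * c := min_le_right _ _
  have core : ∀ u v : E, u ≠ 0 → v ≠ 0 → ‖u‖ ≤ ‖v‖ →
      γ * ‖u - v‖ ^ 2 ≤ (J u - J v) (u - v) := by
    intro u v hu0 hv0 hAB
    have hA : 0 < ‖u‖ := norm_pos_iff.2 hu0
    have hB : 0 < ‖v‖ := norm_pos_iff.2 hv0
    set A := ‖u‖ with hAdef
    set B := ‖v‖ with hBdef
    set p : E := ‖u‖⁻¹ • u with hpdef
    set r : E := ‖v‖⁻¹ • v with hrdef
    have hp1 : ‖p‖ = 1 := by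
      rw [hpdef, norm_smul, norm_inv, norm_norm, inv_mul_cancel₀ (ne_of_gt hA)]
    have hr1 : ‖r‖ = 1 := by
      rw [hrdef, norm_smul, norm_inv, norm_norm, inv_mul_cancel₀ (ne_of_gt hB)]
    have hJu : J u = A • J p := Jscale u hu0
    have hJv : J v = B • J r := Jscale v hv0
    have hup : u = A • p := by
      rw [hpdef, hAdef, smul_inv_smul₀ (ne_of_gt hA)]
    have hvr : v = B • r := by
      rw [hrdef, hBdef, smul_inv_smul₀ (ne_of_gt hB)]
    have hJpp : J p p = 1 := by rw [hJ, hp1]; norm_num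
    have hJrr : J r r = 1 := by rw [hJ, hr1]; norm_num
    set S : ℝ := J p r + J r p with hSdef
    have eu : J p u = A := by
      conv_lhs => rw [hup]
      rw [map_smul, smul_eq_mul, hJpp, mul_one]
    have ev : J p v = B * J p r := by
      conv_lhs => rw [hvr]
      rw [map_smul, smul_eq_mul]
    have eru : J r u = A * J r p := by
      conv_lhs => rw [hup]
      rw [map_smul, smul_eq_mul]
    have erv : J r v = B := by
      conv_lhs => rw [hvr]
      rw [map_smul, smul_eq_mul, hJrr, mul_one]
    have hexp : (J u - J v) (u - v) = A^2 + B^2 - A*B*S := by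
      have expand : (J u - J v) (u - v) = A * (J p u - J p v) - B * (J r u - J r v) := by
        rw [hJu, hJv]
        simp only [ContinuousLinearMap.sub_apply, ContinuousLinearMap.smul_apply,
          smul_eq_mul, map_sub]
        ring
      rw [expand, eu, ev, eru, erv, hSdef]
      ring
    set ε : ℝ := ‖p - r‖ with hεdef
    have hε0 : 0 ≤ ε := norm_nonneg _
    have hS : S ≤ 2 - 4 * c * ε ^ 2 := by
      rcases eq_or_ne p r with heq | hne
      · have hz : ε = 0 := by rw [hεdef, heq, sub_self, norm_zero]
        have : S = 2 := by rw [hSdef, heq, hJrr]; ring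
        rw [this, hz]
        norm_num
      · have hnorm : ‖p + r‖ ≤ 2 - 2 * (c * ε ^ 2) := conv p r hp1 hr1 hne
        have hpair : (J p + J r) (p + r) = 2 + S := by
          simp only [ContinuousLinearMap.add_apply, map_add, hJpp, hJrr, hSdef]
          ring
        have hb : (J p + J r) (p + r) ≤ 2 * ‖p + r‖ := by
          calc (J p + J r) (p + r) ≤ |(J p + J r) (p + r)| := le_abs_self _
            _ = ‖(J p + J r) (p + r)‖ := (Real.norm_eq_abs _).symm
            _ ≤ ‖J p + J r‖ * ‖p + r‖ := (J p + J r).le_opNorm _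
            _ ≤ (‖J p‖ + ‖J r‖) * ‖p + r‖ :=
                mul_le_mul_of_nonneg_right (norm_add_le _ _) (norm_nonneg _)
            _ = 2 * ‖p + r‖ := by rw [hJn, hJn, hp1, hr1]; ring
        rw [hpair] at hb
        linarith
    have hloc : ‖u - v‖ ≤ A * ε + (B - A) := by
      have e : u - v = A • (p - r) + (A - B) • r := by
        conv_lhs => rw [hup, hvr]
        rw [smul_sub, sub_smul]
        abel
      have n1 := norm_smul A (p - r)
      have n2 := norm_smul (A - B) r
      calc ‖u - v‖ = ‖A • (p - r) + (A - B) • r‖ := by rw [e]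
        _ ≤ ‖A • (p - r)‖ + ‖(A - B) • r‖ := norm_add_le _ _
        _ = A * ε + |A - B| := by
            rw [n1, n2, Real.norm_eq_abs, Real.norm_eq_abs, abs_of_pos hA, hr1,
              mul_one, hεdef]
        _ = A * ε + (B - A) := by
            rw [abs_of_nonpos (by linarith : A - B ≤ 0)]
            ring
    have huv0 : 0 ≤ ‖u - v‖ := norm_nonneg _
    rw [hexp]
    clear_value A B p r S ε
    exact core_arith A B S c γ ε ‖u - v‖ hA hB hAB hc hγ hγ1 hγ2 hε0 hS huv0 hloc
  have mono : ∀ u v : E, γ * ‖u - v‖ ^ 2 ≤ (J u - J v) (u - v) := by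
    intro u v
    rcases eq_or_ne u v with rfl | huv
    · simp
    rcases eq_or_ne u 0 with rfl | hu0
    · have e : (J 0 - J v) ((0:E) - v) = ‖v‖^2 := by
        rw [J0]
        simp [hJ]
      rw [e]
      have : ‖(0:E) - v‖ = ‖v‖ := by rw [zero_sub, norm_neg]
      rw [this]
      nlinarith [sq_nonneg ‖v‖, norm_nonneg v]
    rcases eq_or_ne v 0 with rfl | hv0
    · have e : (J u - J 0) (u - (0:E)) = ‖u‖^2 := by
        rw [J0]
        simp [hJ]
      rw [e]
      have : ‖u - (0:E)‖ = ‖u‖ := by rw [sub_zero]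
      rw [this]
      nlinarith [sq_nonneg ‖u‖, norm_nonneg u]
    rcases le_total ‖u‖ ‖v‖ with h | h
    · exact core u v hu0 hv0 h
    · have hcore := core v u hv0 hu0 h
      have hsym : (J v - J u) (v - u) = (J u - J v) (u - v) := by
        simp only [ContinuousLinearMap.sub_apply, map_sub]
        ring
      rw [norm_sub_rev u v, ← hsym]
      exact hcore
  -- final assembly
  refine ⟨M0 / γ, by positivity, ?_⟩
  intro x hxC y hyC hxR hyR
  rcases eq_or_ne (T x) (T y) with hTeq | hTne
  · rw [hTeq, sub_self, norm_zero]
    have : (0:ℝ) ≤ ‖x - y‖ ^ (q - 1) := Real.rpow_nonneg (norm_nonneg _) _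
    positivity
  · set t := ‖T x - T y‖ with htdef
    have ht : 0 < t := by
      rw [htdef, norm_pos_iff]
      exact sub_ne_zero.2 hTne
    have h1 : γ * t^2 ≤ (J (T x) - J (T y)) (T x - T y) := mono (T x) (T y)
    have h2 := hT x hxC y hyC
    have h3 : (J x - J y) (T x - T y) ≤ ‖J x - J y‖ * t := by
      calc (J x - J y) (T x - T y) ≤ |(J x - J y) (T x - T y)| := le_abs_self _
        _ = ‖(J x - J y) (T x - T y)‖ := (Real.norm_eq_abs _).symm
        _ ≤ ‖J x - J y‖ * ‖T x - T y‖ := (J x - J y).le_opNorm _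
        _ = ‖J x - J y‖ * t := rfl
    have h4 : ‖J x - J y‖ ≤ M0 * ‖x - y‖^(q-1) := J_holder x y hxR hyR
    have h5 : γ * t^2 ≤ (M0 * ‖x - y‖^(q-1)) * t := by
      have := mul_le_mul_of_nonneg_right h4 ht.le
      linarith
    have h6 : γ * t ≤ M0 * ‖x - y‖^(q-1) := by
      have hmul : (γ * t) * t ≤ (M0 * ‖x - y‖^(q-1)) * t := by nlinarith [h5]
      exact le_of_mul_le_mul_right hmul ht
    rw [div_mul_eq_mul_div, le_div_iff₀ hγ]
    linarith
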